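/- Let n ≥ 1, γ > 0, C > 0, M > 0, let y₁, …, yₙ ∈ ℝ, x₁, …, xₙ ∈ ℝ^p, and let v₁, …, vₙ ≥ 0 be weights with ‖vᵢ xᵢ‖₂ ≤ C for every i. Let ρ : ℝ → ℝ be three times continuously differentiable with 0 ≤ ρ''(t) ≤ M and |ρ'''(t)| ≤ γ ρ''(t)^{3/2} for all t ∈ ℝ (i.e. ρ is (γ,3)-self-concordant with bounded second derivative). Define the Schweppe loss L(θ) = (1/n) Σᵢ ρ((yᵢ − ⟨xᵢ, θ⟩) vᵢ) for θ ∈ ℝ^p. Then L is (γC√M, 2)-self-concordant, i.e. |∇³L(θ)[v,u,u]| ≤ γC√M·(uᵀ∇²L(θ)u)·‖v‖₂ for all θ, u, v ∈ ℝ^p. -/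

import Mathlib

open scoped RealInnerProductSpace

lemma uni_apply (k : ℕ) (f : ℝ → ℝ) (t : ℝ) (m : Fin k → ℝ) :
    iteratedFDeriv ℝ k f t m = (∏ j, m j) * iteratedDeriv k f t := by
  have h1 : m = fun j => (m j) • (1 : ℝ) := by funext j; simp
  calc iteratedFDeriv ℝ k f t m = iteratedFDeriv ℝ k f t (fun j => (m j) • (1:ℝ)) := by
        rw [← h1]
    _ = (∏ j, m j) • iteratedFDeriv ℝ k f t (fun _ => (1:ℝ)) :=
        (iteratedFDeriv ℝ k f t).map_smul_univ _ _
    _ = (∏ j, m j) * iteratedDeriv k f t := by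
        rw [iteratedDeriv_eq_iteratedFDeriv]; rfl

lemma comp_affine_apply {p : ℕ} (ρ : ℝ → ℝ) (hρC3 : ContDiff ℝ 3 ρ)
    (yi vi : ℝ) (xi : EuclideanSpace ℝ (Fin p)) (k : ℕ) (hk : (k : WithTop ℕ∞) ≤ 3)
    (θ : EuclideanSpace ℝ (Fin p)) (m : Fin k → EuclideanSpace ℝ (Fin p)) :
    iteratedFDeriv ℝ k (fun θ => ρ ((yi - ⟪xi, θ⟫) * vi)) θ m =
      (∏ j, (-vi * ⟪xi, m j⟫)) * iteratedDeriv k ρ ((yi - ⟪xi, θ⟫) * vi) := by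
  set ℓ : EuclideanSpace ℝ (Fin p) →L[ℝ] ℝ := (-vi) • (innerSL ℝ xi) with hℓ
  have hℓap : ∀ z, ℓ z = -vi * ⟪xi, z⟫ := fun z => by
    simp [hℓ]
  set σ : ℝ → ℝ := fun t => ρ (yi * vi + t) with hσ
  have hfun : (fun θ => ρ ((yi - ⟪xi, θ⟫) * vi)) = σ ∘ ℓ := by
    funext z
    simp only [Function.comp_apply, hσ, hℓap]
    ring_nf
  have hσC : ContDiff ℝ 3 σ := hρC3.comp (contDiff_const.add contDiff_id)
  rw [hfun, ℓ.iteratedFDeriv_comp_right hσC θ hk,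
    ContinuousMultilinearMap.compContinuousLinearMap_apply, uni_apply]
  have h2 : iteratedDeriv k σ (ℓ θ) = iteratedDeriv k ρ (yi * vi + ℓ θ) := by
    rw [hσ, iteratedDeriv_comp_const_add]
  rw [h2]
  have h3 : yi * vi + ℓ θ = (yi - ⟪xi, θ⟫) * vi := by rw [hℓap]; ring
  rw [h3]
  simp only [hℓap]

/-- if `ρ` is `(γ,3)`-self-concordant with second derivative bounded by `M`, and
the Schweppe weights satisfy `‖vᵢ xᵢ‖ ≤ C`, then the Schweppe loss
`L(θ) = (1/n) ∑ᵢ ρ((yᵢ - ⟨xᵢ,θ⟩) vᵢ)` is `(γ C √M, 2)`-self-concordant. -/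
theorem stmt_14 {p : ℕ} (n : ℕ) (hn : 1 ≤ n) (γ C M : ℝ) (hγ : 0 < γ) (hC : 0 < C) (hM : 0 < M)
    (y : Fin n → ℝ) (x : Fin n → EuclideanSpace ℝ (Fin p)) (v : Fin n → ℝ)
    (hv : ∀ i, 0 ≤ v i) (hvx : ∀ i, ‖v i • x i‖ ≤ C)
    (ρ : ℝ → ℝ) (hρC3 : ContDiff ℝ 3 ρ)
    (hρ'' : ∀ t : ℝ, 0 ≤ iteratedDeriv 2 ρ t ∧ iteratedDeriv 2 ρ t ≤ M)
    (hρSC : ∀ t : ℝ, |iteratedDeriv 3 ρ t| ≤ γ * iteratedDeriv 2 ρ t ^ ((3 : ℝ) / 2))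
    (L : EuclideanSpace ℝ (Fin p) → ℝ)
    (hL : ∀ θ, L θ = (1 / (n : ℝ)) * ∑ i, ρ ((y i - ⟪x i, θ⟫) * v i)) :
    ∀ θ u w : EuclideanSpace ℝ (Fin p),
      |iteratedFDeriv ℝ 3 L θ ![w, u, u]| ≤
        γ * C * Real.sqrt M * iteratedFDeriv ℝ 2 L θ ![u, u] * ‖w‖ := by
  have hLfun : L = fun θ => (1 / (n : ℝ)) • (∑ i, ρ ((y i - ⟪x i, θ⟫) * v i)) := by
    funext θ; rw [hL θ]; rfl
  have hg : ∀ i : Fin n,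
      ContDiff ℝ 3 (fun θ : EuclideanSpace ℝ (Fin p) => ρ ((y i - ⟪x i, θ⟫) * v i)) := fun i =>
    hρC3.comp ((contDiff_const.sub (innerSL ℝ (x i)).contDiff).mul contDiff_const)
  have key : ∀ (k : ℕ), (k : WithTop ℕ∞) ≤ 3 →
      ∀ (θ : EuclideanSpace ℝ (Fin p)) (m : Fin k → EuclideanSpace ℝ (Fin p)),
      iteratedFDeriv ℝ k L θ m =
        (1 / (n : ℝ)) *
          ∑ i, (∏ j, (-(v i) * ⟪x i, m j⟫)) * iteratedDeriv k ρ ((y i - ⟪x i, θ⟫) * v i) := by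
    intro k hk θ m
    have hsum : ContDiff ℝ 3 (fun θ : EuclideanSpace ℝ (Fin p) =>
        ∑ i, ρ ((y i - ⟪x i, θ⟫) * v i)) := ContDiff.sum fun i _ => hg i
    rw [hLfun, iteratedFDeriv_const_smul_apply' (hsum.of_le hk).contDiffAt]
    have hs : iteratedFDeriv ℝ k (fun θ : EuclideanSpace ℝ (Fin p) =>
          ∑ i, ρ ((y i - ⟪x i, θ⟫) * v i)) θ =
        ∑ i, iteratedFDeriv ℝ k
          (fun θ : EuclideanSpace ℝ (Fin p) => ρ ((y i - ⟪x i, θ⟫) * v i)) θ := by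
      have h := iteratedFDeriv_sum
        (f := fun (i : Fin n) (θ : EuclideanSpace ℝ (Fin p)) => ρ ((y i - ⟪x i, θ⟫) * v i))
        (u := Finset.univ) (i := k) (fun i _ => (hg i).of_le hk)
      have h2 := congrFun h θ
      simpa [Finset.sum_apply] using h2
    rw [hs]
    simp only [ContinuousMultilinearMap.smul_apply, ContinuousMultilinearMap.sum_apply, smul_eq_mul]
    congr 1
    refine Finset.sum_congr rfl fun i _ => ?_
    exact comp_affine_apply ρ hρC3 (y i) (v i) (x i) k hk θ m
  -- bound on third derivative of ρ
  have hρ''' : ∀ t : ℝ, |iteratedDeriv 3 ρ t| ≤ γ * Real.sqrt M * iteratedDeriv 2 ρ t := by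
    intro t
    obtain ⟨h0, h1⟩ := hρ'' t
    have hr : iteratedDeriv 2 ρ t ^ ((3 : ℝ) / 2) ≤ Real.sqrt M * iteratedDeriv 2 ρ t := by
      rcases eq_or_lt_of_le h0 with h | h
      · rw [← h, Real.zero_rpow (by norm_num)]
        simp
      · have h32 : (3 : ℝ) / 2 = 1 + 1 / 2 := by norm_num
        rw [h32, Real.rpow_add h, Real.rpow_one, ← Real.sqrt_eq_rpow]
        rw [mul_comm (Real.sqrt M)]
        exact mul_le_mul_of_nonneg_left (Real.sqrt_le_sqrt h1) h0
    calc |iteratedDeriv 3 ρ t| ≤ γ * iteratedDeriv 2 ρ t ^ ((3 : ℝ) / 2) := hρSC t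
      _ ≤ γ * (Real.sqrt M * iteratedDeriv 2 ρ t) := mul_le_mul_of_nonneg_left hr hγ.le
      _ = γ * Real.sqrt M * iteratedDeriv 2 ρ t := by ring
  have hb : ∀ (i : Fin n) (z : EuclideanSpace ℝ (Fin p)), |(-(v i) * ⟪x i, z⟫)| ≤ C * ‖z‖ := by
    intro i z
    have h1 : |(-(v i) * ⟪x i, z⟫)| = |⟪v i • x i, z⟫| := by
      rw [real_inner_smul_left, neg_mul, abs_neg]
    rw [h1]
    calc |⟪v i • x i, z⟫| ≤ ‖v i • x i‖ * ‖z‖ := abs_real_inner_le_norm _ _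
      _ ≤ C * ‖z‖ := mul_le_mul_of_nonneg_right (hvx i) (norm_nonneg z)
  intro θ u w
  rw [key 3 (by norm_num) θ ![w, u, u], key 2 (by norm_num) θ ![u, u]]
  simp only [Fin.prod_univ_three, Fin.prod_univ_two, Matrix.cons_val_zero, Matrix.cons_val_one,
    Matrix.head_cons, Matrix.cons_val_two, Matrix.tail_cons]
  set b : Fin n → EuclideanSpace ℝ (Fin p) → ℝ := fun i z => -(v i) * ⟪x i, z⟫ with hbdef
  set t : Fin n → ℝ := fun i => (y i - ⟪x i, θ⟫) * v i with htdef
  have h1n : (0 : ℝ) ≤ 1 / (n : ℝ) := by positivity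
  have hterm : ∀ i : Fin n,
      |b i w * b i u * b i u * iteratedDeriv 3 ρ (t i)| ≤
        (C * ‖w‖) * (b i u * b i u) * (γ * Real.sqrt M * iteratedDeriv 2 ρ (t i)) := by
    intro i
    have e1 : |b i w * b i u * b i u * iteratedDeriv 3 ρ (t i)| =
        |b i w| * (|b i u| * |b i u|) * |iteratedDeriv 3 ρ (t i)| := by
      rw [abs_mul, abs_mul, abs_mul]; ring
    rw [e1, abs_mul_abs_self]
    have h2 := (hρ'' (t i)).1
    have hbu : (0 : ℝ) ≤ b i u * b i u := mul_self_nonneg _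
    have hCw : (0 : ℝ) ≤ C * ‖w‖ := by positivity
    exact mul_le_mul (mul_le_mul (hb i w) le_rfl hbu hCw) (hρ''' (t i)) (abs_nonneg _)
      (by positivity)
  calc |1 / (n : ℝ) * ∑ i, b i w * b i u * b i u * iteratedDeriv 3 ρ (t i)|
      = 1 / (n : ℝ) * |∑ i, b i w * b i u * b i u * iteratedDeriv 3 ρ (t i)| := by
        rw [abs_mul, abs_of_nonneg h1n]
    _ ≤ 1 / (n : ℝ) * ∑ i, |b i w * b i u * b i u * iteratedDeriv 3 ρ (t i)| := by
        gcongr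
        exact Finset.abs_sum_le_sum_abs _ _
    _ ≤ 1 / (n : ℝ) *
        ∑ i, (C * ‖w‖) * (b i u * b i u) * (γ * Real.sqrt M * iteratedDeriv 2 ρ (t i)) := by
        gcongr with i
        exact hterm i
    _ = γ * C * Real.sqrt M *
        (1 / (n : ℝ) * ∑ i, b i u * b i u * iteratedDeriv 2 ρ (t i)) * ‖w‖ := by
        rw [Finset.mul_sum, Finset.mul_sum, Finset.mul_sum]
        rw [Finset.sum_mul]
        refine Finset.sum_congr rfl fun i _ => ?_
        ring
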